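/- Let μ be a measure on ℝ^d, θ0 ∈ ℝ^d, and let h0 : ℝ^d → ℝ be μ-integrable. Suppose h0 satisfies the sign-alignment condition at x with respect to θ0 for μ-almost every x. Then for every θ ∈ ℝ^d, the Manski maximum score criterion satisfies ∫ h0(x)·1{⟪x,θ⟫ > 0} dμ(x) ≤ ∫ max(h0(x), 0) dμ(x) = ∫ h0(x)·1{⟪x,θ0⟫ > 0} dμ(x); that is, θ0 maximizes the maximum score population criterion Q_MS(θ) := ∫ h0(x)·1{⟪x,θ⟫ > 0} dμ(x). -/

import Mathlib

open MeasureTheory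
open scoped RealInnerProductSpace

/-- `h0` satisfies the sign-alignment condition at `x` with respect to `θ0`:
`h0(x) > 0 ↔ ⟪x,θ0⟫ > 0` and `h0(x) < 0 ↔ ⟪x,θ0⟫ < 0`. -/
def SignAlign {d : ℕ} (θ0 : EuclideanSpace ℝ (Fin d))
    (h0 : EuclideanSpace ℝ (Fin d) → ℝ) (x : EuclideanSpace ℝ (Fin d)) : Prop :=
  (0 < h0 x ↔ 0 < ⟪x, θ0⟫) ∧ (h0 x < 0 ↔ ⟪x, θ0⟫ < 0)

/-- `θ0` maximizes Manski's maximum score population criterion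
`Q_MS(θ) = ∫ h0(x)·1{⟪x,θ⟫ > 0} dμ(x)`, whose maximal value is `∫ max(h0, 0) dμ`. -/
theorem manski_ms_population_max {d : ℕ} (μ : Measure (EuclideanSpace ℝ (Fin d)))
    (θ0 : EuclideanSpace ℝ (Fin d)) (h0 : EuclideanSpace ℝ (Fin d) → ℝ)
    (hint : Integrable h0 μ) (hsa : ∀ᵐ x ∂μ, SignAlign θ0 h0 x) :
    ∀ θ : EuclideanSpace ℝ (Fin d),
      (∫ x, (if 0 < ⟪x, θ⟫ then h0 x else 0) ∂μ) ≤ (∫ x, max (h0 x) 0 ∂μ) ∧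
      (∫ x, max (h0 x) 0 ∂μ) = ∫ x, (if 0 < ⟪x, θ0⟫ then h0 x else 0) ∂μ := by
  have hintθ : ∀ θ : EuclideanSpace ℝ (Fin d),
      Integrable (fun x => if 0 < ⟪x, θ⟫ then h0 x else 0) μ := by
    intro θ
    have hmeas : MeasurableSet {x : EuclideanSpace ℝ (Fin d) | 0 < ⟪x, θ⟫} := by
      have : Continuous fun x : EuclideanSpace ℝ (Fin d) => ⟪x, θ⟫ :=
        continuous_id.inner continuous_const
      exact isOpen_lt continuous_const this |>.measurableSet
    have := hint.indicator hmeas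
    refine this.congr (Filter.Eventually.of_forall fun x => ?_)
    simp [Set.indicator_apply]
  intro θ
  constructor
  · refine integral_mono (hintθ θ) hint.pos_part (fun x => ?_)
    by_cases h : 0 < ⟪x, θ⟫
    · rw [if_pos h]; exact le_max_left _ _
    · rw [if_neg h]; exact le_max_right _ _
  · refine integral_congr_ae ?_
    filter_upwards [hsa] with x ⟨h1, h2⟩
    by_cases h : 0 < ⟪x, θ0⟫
    · rw [if_pos h]; exact max_eq_left (le_of_lt (h1.mpr h))
    · have : ¬ 0 < h0 x := fun hh => h (h1.mp hh)
      rw [if_neg h]; exact max_eq_right (not_lt.mp this)
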